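/- Let q ∈ (0,1), ω ≥ 0, ω₀ = ω/(1-q), and f : I → ℝ with D̃_{q,ω}[f](t) = 0 for all t ∈ I^{q,ω}. If f is continuous at ω₀, then f is constant on I. -/

import Mathlib

/-- If the Hahn symmetric derivative of `f` vanishes on `I^{q,ω} = qI + ω` and `f` is
continuous at `ω₀ = ω/(1-q)`, then `f` is constant on the interval `I`. -/
theorem stmt4 (q ω : ℝ) (hq : q ∈ Set.Ioo (0:ℝ) 1) (hω : 0 ≤ ω)
    (I : Set ℝ) (hI : I.OrdConnected) (hω0 : ω / (1 - q) ∈ I)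
    (f : ℝ → ℝ)
    (hD : ∀ t ∈ (fun s => q * s + ω) '' I,
      (if t = ω / (1 - q) then deriv f t
       else (f (q * t + ω) - f (q⁻¹ * (t - ω))) / ((q - q⁻¹) * t + (1 + q⁻¹) * ω)) = 0)
    (hcont : ContinuousWithinAt f I (ω / (1 - q))) :
    ∀ t ∈ I, f t = f (ω / (1 - q)) := by
  obtain ⟨hq0, hq1⟩ := hq
  have hq0' : q ≠ 0 := ne_of_gt hq0
  have h1q : (0:ℝ) < 1 - q := by linarith
  set c : ℝ := ω / (1 - q) with hc
  have hfix : q * c + ω = c := by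
    rw [hc]; field_simp; ring
  -- key step: one application of the vanishing derivative
  have key : ∀ s ∈ I, s ≠ c → f (c + q ^ 2 * (s - c)) = f s := by
    intro s hs hsc
    have h := hD (q * s + ω) ⟨s, hs, rfl⟩
    have hne : q * s + ω ≠ c := by
      intro h'
      apply hsc
      have : q * (s - c) = 0 := by
        have := hfix
        nlinarith [h']
      rcases mul_eq_zero.1 this with h0 | h0
      · exact absurd h0 hq0'
      · linarith
    rw [if_neg hne] at h
    have hden : (q - q⁻¹) * (q * s + ω) + (1 + q⁻¹) * ω ≠ 0 := by
      have heq : (q - q⁻¹) * (q * s + ω) + (1 + q⁻¹) * ω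
          = (q - q⁻¹) * q * (s - c) := by
        have : q * c + ω = c := hfix
        field_simp
        nlinarith [this]
      rw [heq]
      apply mul_ne_zero (mul_ne_zero _ hq0')
      · intro h0; apply hsc; linarith
      · intro h0
        have hqq : q - q⁻¹ ≠ 0 := by
          intro h0
          have : q * q = 1 := by
            field_simp at h0
            nlinarith [h0]
          nlinarith
        exact hqq h0
    have hnum : f (q * (q * s + ω) + ω) - f (q⁻¹ * (q * s + ω - ω)) = 0 :=
      by
        by_contra hn
        exact hn (by
          have := div_eq_zero_iff.1 h
          rcases this with h' | h'
          · exact h'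
          · exact absurd h' hden)
    have h1 : q⁻¹ * (q * s + ω - ω) = s := by field_simp; ring
    have h2 : q * (q * s + ω) + ω = c + q ^ 2 * (s - c) := by
      have := hfix
      nlinarith [this]
    rw [h1, h2] at hnum
    linarith
  intro t ht
  by_cases htc : t = c
  · rw [htc]
  -- the iterated sequence
  set g : ℕ → ℝ := fun n => c + (q ^ 2) ^ n * (t - c) with hg
  have hmem : ∀ r : ℝ, 0 ≤ r → r ≤ 1 → c + r * (t - c) ∈ I := by
    intro r hr0 hr1
    rcases le_total t c with h | h
    · have h1 : t ≤ c + r * (t - c) := by nlinarith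
      have h2 : c + r * (t - c) ≤ c := by nlinarith
      exact hI.out ht hω0 ⟨h1, h2⟩
    · have h1 : c ≤ c + r * (t - c) := by nlinarith
      have h2 : c + r * (t - c) ≤ t := by nlinarith
      exact hI.out hω0 ht ⟨h1, h2⟩
  have hq2a : (0:ℝ) ≤ q ^ 2 := sq_nonneg q
  have hq2b : q ^ 2 ≤ 1 := by nlinarith
  have hgI : ∀ n, g n ∈ I := by
    intro n
    exact hmem _ (pow_nonneg hq2a n) (pow_le_one₀ hq2a hq2b)
  have hgne : ∀ n, g n ≠ c := by
    intro n h
    apply htc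
    have hh : c + (q ^ 2) ^ n * (t - c) = c := h
    have : (q ^ 2) ^ n * (t - c) = 0 := by linarith
    rcases mul_eq_zero.1 this with h0 | h0
    · exact absurd h0 (pow_ne_zero n (pow_ne_zero 2 hq0'))
    · linarith
  have hgf : ∀ n, f (g n) = f t := by
    intro n
    induction n with
    | zero => simp [hg]
    | succ n ih =>
      have hstep := key (g n) (hgI n) (hgne n)
      have : c + q ^ 2 * (g n - c) = g (n + 1) := by
        simp [hg]; ring
      rw [this] at hstep
      rw [hstep, ih]
  -- limit
  have hlim : Filter.Tendsto g Filter.atTop (nhds c) := by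
    have h0 : Filter.Tendsto (fun n => (q ^ 2) ^ n) Filter.atTop (nhds (0:ℝ)) := by
      apply tendsto_pow_atTop_nhds_zero_of_lt_one hq2a
      nlinarith
    have := (h0.mul_const (t - c)).const_add c
    simpa using this
  have hlim' : Filter.Tendsto g Filter.atTop (nhdsWithin c I) := by
    apply tendsto_nhdsWithin_of_tendsto_nhds_of_eventually_within _ hlim
    exact Filter.Eventually.of_forall hgI
  have hfin : Filter.Tendsto (fun n => f (g n)) Filter.atTop (nhds (f c)) :=
    hcont.tendsto.comp hlim'
  have hconst : Filter.Tendsto (fun n => f (g n)) Filter.atTop (nhds (f t)) := by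
    simp only [hgf]
    exact tendsto_const_nhds
  exact tendsto_nhds_unique hconst hfin
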